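/- Any Euler field E on the 2-dimensional F-manifold germ I₂(m) (m ≥ 3), given by (ℂ²,0) with coordinates (t₁,t₂), e = ∂₁ and ∂₂∘∂₂ = t₂^{m−2}·e, has the form E = (t₁ + c₁)∂₁ + (2/m)t₂∂₂ for some c₁ ∈ ℂ. Equivalently: a vector field E = f₁(t)∂₁ + f₂(t)∂₂ satisfies Lie_E(∘) = ∘ on this F-manifold if and only if f₁ = t₁ + c₁ and f₂ = (2/m)t₂. -/

import Mathlib

open Matrix

noncomputable section

/-- The multiplication of the F-manifold `I₂(m)`: `∂₁` is the unit and
`∂₂∘∂₂ = t₂^{m−2}·∂₁`, extended function-bilinearly to vector fields on `ℂ²`. -/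
def vmulI2 (m : ℕ) (X Y : (Fin 2 → ℂ) → (Fin 2 → ℂ)) : (Fin 2 → ℂ) → Fin 2 → ℂ :=
  fun t => ![X t 0 * Y t 0 + t 1 ^ (m - 2) * (X t 1 * Y t 1),
             X t 0 * Y t 1 + X t 1 * Y t 0]

/-- The Lie bracket of vector fields on `ℂ²`. -/
def vbracket (X Y : (Fin 2 → ℂ) → (Fin 2 → ℂ)) : (Fin 2 → ℂ) → Fin 2 → ℂ :=
  fun t i => ∑ j : Fin 2,
    (X t j * fderiv ℂ (fun s => Y s i) t (Pi.single j 1)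
      - Y t j * fderiv ℂ (fun s => X s i) t (Pi.single j 1))

abbrev e₁v : Fin 2 → ℂ := Pi.single 1 1
abbrev e₀v : Fin 2 → ℂ := Pi.single 0 1

lemma hasF_proj_pow (n : ℕ) (t : Fin 2 → ℂ) :
    HasFDerivAt (fun s : Fin 2 → ℂ => s 1 ^ n)
      (((n : ℂ) * t 1 ^ (n - 1)) • (ContinuousLinearMap.proj 1 : (Fin 2 → ℂ) →L[ℂ] ℂ)) t :=
  (hasDerivAt_pow n (t 1)).comp_hasFDerivAt t (hasFDerivAt_apply 1 t)

lemma fderiv_pow_apply (n : ℕ) (t v : Fin 2 → ℂ) :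
    fderiv ℂ (fun s : Fin 2 → ℂ => s 1 ^ n) t v = (n : ℂ) * t 1 ^ (n - 1) * v 1 := by
  rw [(hasF_proj_pow n t).fderiv]; simp

lemma vbracket_apply (X Y : (Fin 2 → ℂ) → (Fin 2 → ℂ)) (t : Fin 2 → ℂ) (i : Fin 2) :
    vbracket X Y t i
      = X t 0 * fderiv ℂ (fun s => Y s i) t e₀v + X t 1 * fderiv ℂ (fun s => Y s i) t e₁v
        - Y t 0 * fderiv ℂ (fun s => X s i) t e₀v - Y t 1 * fderiv ℂ (fun s => X s i) t e₁v := by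
  simp only [vbracket, Fin.sum_univ_two, e₀v, e₁v]; ring

lemma vmul_zero' (m : ℕ) (X Y : (Fin 2 → ℂ) → (Fin 2 → ℂ)) (s : Fin 2 → ℂ) :
    vmulI2 m X Y s 0 = X s 0 * Y s 0 + s 1 ^ (m - 2) * (X s 1 * Y s 1) := by
  simp [vmulI2]

lemma vmul_one' (m : ℕ) (X Y : (Fin 2 → ℂ) → (Fin 2 → ℂ)) (s : Fin 2 → ℂ) :
    vmulI2 m X Y s 1 = X s 0 * Y s 1 + X s 1 * Y s 0 := by
  simp [vmulI2]

@[simp] lemma ev00 : e₀v 0 = 1 := by simp [e₀v]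
@[simp] lemma ev01 : e₀v 1 = 0 := by simp [e₀v, Pi.single_apply]
@[simp] lemma ev10 : e₁v 0 = 0 := by simp [e₁v, Pi.single_apply]
@[simp] lemma ev11 : e₁v 1 = 1 := by simp [e₁v]

lemma clm_eq_zero (L : (Fin 2 → ℂ) →L[ℂ] ℂ) (h0 : L e₀v = 0)
    (h1 : L e₁v = 0) : L = 0 := by
  ext v
  have hv : v = v 0 • e₀v + v 1 • e₁v := by
    funext j; fin_cases j <;> simp [Pi.single_apply]
  conv_lhs => rw [hv]
  simp [h0, h1]

lemma const_on_of_fderiv_zero {U : Set (Fin 2 → ℂ)} (hU : IsOpen U) (hUc : IsPreconnected U)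
    {f : (Fin 2 → ℂ) → ℂ} (hf : DifferentiableOn ℂ f U) (hf' : ∀ t ∈ U, fderiv ℂ f t = 0)
    {x y : Fin 2 → ℂ} (hx : x ∈ U) (hy : y ∈ U) : f x = f y := by
  haveI : PreconnectedSpace U := Subtype.preconnectedSpace hUc
  have hg : IsLocallyConstant (fun z : U => f z) := by
    rw [IsLocallyConstant.iff_exists_open]
    rintro ⟨a, haU⟩
    obtain ⟨ε, hε, hball⟩ := Metric.isOpen_iff.mp hU a haU
    refine ⟨Subtype.val ⁻¹' Metric.ball a ε, Metric.isOpen_ball.preimage continuous_subtype_val,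
      Set.mem_preimage.mpr (Metric.mem_ball_self hε), ?_⟩
    rintro ⟨b, hbU⟩ hb
    exact (convex_ball a ε).is_const_of_fderivWithin_eq_zero (hf.mono hball)
      (fun z hz => by rw [fderivWithin_of_isOpen Metric.isOpen_ball hz]; exact hf' z (hball hz))
      hb (Metric.mem_ball_self hε)
  exact hg.apply_eq_of_preconnectedSpace ⟨x, hx⟩ ⟨y, hy⟩

lemma eq_zero_on_slice {U : Set (Fin 2 → ℂ)} (hU : IsOpen U) {h : (Fin 2 → ℂ) → ℂ}
    (hcont : ContinuousOn h U) (hzero : ∀ t ∈ U, t 1 ≠ 0 → h t = 0) :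
    ∀ t ∈ U, h t = 0 := by
  intro t ht
  by_cases h1 : t 1 ≠ 0
  · exact hzero t ht h1
  push_neg at h1
  have hc : Filter.Tendsto (fun n : ℕ => ((1 / ((n : ℝ) + 1) : ℝ) : ℂ)) Filter.atTop (nhds 0) := by
    have h2 := tendsto_one_div_add_atTop_nhds_zero_nat (𝕜 := ℝ)
    have h3 := (Complex.continuous_ofReal.tendsto 0).comp h2
    rw [Complex.ofReal_zero] at h3
    exact h3
  have hseq : Filter.Tendsto (fun n : ℕ => t + ((1 / ((n : ℝ) + 1) : ℝ) : ℂ) • e₁v)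
      Filter.atTop (nhds t) := by
    simpa using (hc.smul_const e₁v).const_add t
  have hmem : ∀ᶠ n : ℕ in Filter.atTop, (t + ((1 / ((n : ℝ) + 1) : ℝ) : ℂ) • e₁v) ∈ U :=
    hseq.eventually (hU.eventually_mem ht)
  have hval : ∀ n : ℕ, (t + ((1 / ((n : ℝ) + 1) : ℝ) : ℂ) • e₁v) 1 ≠ 0 := by
    intro n
    have hp : (0:ℝ) < 1 / ((n : ℝ) + 1) := by positivity
    have : ((1 / ((n : ℝ) + 1) : ℝ) : ℂ) ≠ 0 := by
      exact_mod_cast Complex.ofReal_ne_zero.mpr hp.ne'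
    simpa [h1, Pi.single_apply] using this
  have h0' : ∀ᶠ n : ℕ in Filter.atTop,
      h (t + ((1 / ((n : ℝ) + 1) : ℝ) : ℂ) • e₁v) = 0 := by
    filter_upwards [hmem] with n hn
    exact hzero _ hn (hval n)
  have hlim : Filter.Tendsto (fun n : ℕ => h (t + ((1 / ((n : ℝ) + 1) : ℝ) : ℂ) • e₁v))
      Filter.atTop (nhds (h t)) :=
    ((hcont.continuousAt (hU.mem_nhds ht)).tendsto).comp hseq
  exact tendsto_nhds_unique ((Filter.tendsto_congr' h0').mp hlim) tendsto_const_nhds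

lemma fderiv_vmul0 (m : ℕ) (X Y : (Fin 2 → ℂ) → (Fin 2 → ℂ)) (t v : Fin 2 → ℂ)
    (hX0 : DifferentiableAt ℂ (fun s => X s 0) t) (hX1 : DifferentiableAt ℂ (fun s => X s 1) t)
    (hY0 : DifferentiableAt ℂ (fun s => Y s 0) t) (hY1 : DifferentiableAt ℂ (fun s => Y s 1) t) :
    fderiv ℂ (fun s => vmulI2 m X Y s 0) t v
      = fderiv ℂ (fun s => X s 0) t v * Y t 0 + X t 0 * fderiv ℂ (fun s => Y s 0) t v
        + ((m - 2 : ℕ) : ℂ) * t 1 ^ (m - 2 - 1) * v 1 * (X t 1 * Y t 1)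
        + t 1 ^ (m - 2) * (fderiv ℂ (fun s => X s 1) t v * Y t 1
            + X t 1 * fderiv ℂ (fun s => Y s 1) t v) := by
  have h : HasFDerivAt (fun s => vmulI2 m X Y s 0) _ t :=
    (hX0.hasFDerivAt.mul hY0.hasFDerivAt).add
      ((hasF_proj_pow (m - 2) t).mul (hX1.hasFDerivAt.mul hY1.hasFDerivAt))
  rw [show (fun s => vmulI2 m X Y s 0)
      = fun s => X s 0 * Y s 0 + s 1 ^ (m - 2) * (X s 1 * Y s 1) from
    funext fun s => vmul_zero' m X Y s] at h ⊢
  rw [h.fderiv]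
  simp [ContinuousLinearMap.add_apply, ContinuousLinearMap.smul_apply, smul_eq_mul]
  ring

lemma fderiv_vmul1 (m : ℕ) (X Y : (Fin 2 → ℂ) → (Fin 2 → ℂ)) (t v : Fin 2 → ℂ)
    (hX0 : DifferentiableAt ℂ (fun s => X s 0) t) (hX1 : DifferentiableAt ℂ (fun s => X s 1) t)
    (hY0 : DifferentiableAt ℂ (fun s => Y s 0) t) (hY1 : DifferentiableAt ℂ (fun s => Y s 1) t) :
    fderiv ℂ (fun s => vmulI2 m X Y s 1) t v
      = fderiv ℂ (fun s => X s 0) t v * Y t 1 + X t 0 * fderiv ℂ (fun s => Y s 1) t v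
        + fderiv ℂ (fun s => X s 1) t v * Y t 0 + X t 1 * fderiv ℂ (fun s => Y s 0) t v := by
  have h : HasFDerivAt (fun s => vmulI2 m X Y s 1) _ t :=
    (hX0.hasFDerivAt.mul hY1.hasFDerivAt).add (hX1.hasFDerivAt.mul hY0.hasFDerivAt)
  rw [show (fun s => vmulI2 m X Y s 1)
      = fun s => X s 0 * Y s 1 + X s 1 * Y s 0 from funext fun s => vmul_one' m X Y s] at h ⊢
  rw [h.fderiv]
  simp [ContinuousLinearMap.add_apply, ContinuousLinearMap.smul_apply, smul_eq_mul]
  ring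


/-- A holomorphic vector field `E` on a connected open neighbourhood `U` of `0` in `ℂ²`
satisfies `Lie_E(∘) = ∘` for the multiplication of `I₂(m)` if and only if
`E = (t₁ + c₁)∂₁ + (2/m)t₂∂₂` for some `c₁ ∈ ℂ`. -/
theorem statement10 (m : ℕ) (hm : 3 ≤ m)
    (U : Set (Fin 2 → ℂ)) (hU : IsOpen U) (hUc : IsPreconnected U)
    (h0 : (0 : Fin 2 → ℂ) ∈ U)
    (Efld : (Fin 2 → ℂ) → (Fin 2 → ℂ))
    (hE : ∀ i, DifferentiableOn ℂ (fun t => Efld t i) U) :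
    (∀ X Y : (Fin 2 → ℂ) → (Fin 2 → ℂ),
        (∀ i, DifferentiableOn ℂ (fun t => X t i) U) →
        (∀ i, DifferentiableOn ℂ (fun t => Y t i) U) →
        ∀ t ∈ U,
          vbracket Efld (vmulI2 m X Y) t - vmulI2 m (vbracket Efld X) Y t
            - vmulI2 m X (vbracket Efld Y) t = vmulI2 m X Y t)
      ↔ (∃ c₁ : ℂ, ∀ t ∈ U, Efld t = ![t 0 + c₁, (2 / (m : ℂ)) * t 1]) := by
  constructor
  · intro H
    have hμ : ((m : ℂ)) ≠ 0 := by
      exact Nat.cast_ne_zero.mpr (by omega : m ≠ 0)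
    have hc2 : ((m - 2 : ℕ) : ℂ) = (m : ℂ) - 2 := by
      push_cast [Nat.cast_sub (by omega : 2 ≤ m)]; ring
    have he21 : m - 2 - 1 = m - 3 := by omega
    have hd : ∀ (c : Fin 2 → ℂ) (i : Fin 2),
        DifferentiableOn ℂ (fun s : Fin 2 → ℂ => (fun _ : Fin 2 → ℂ => c) s i) U :=
      fun c i => differentiableOn_const _
    -- the four PDE facts
    have key : ∀ t ∈ U,
        fderiv ℂ (fun s => Efld s 0) t e₀v = 1 ∧
        fderiv ℂ (fun s => Efld s 1) t e₀v = 0 ∧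
        fderiv ℂ (fun s => Efld s 0) t e₁v = 0 ∧
        Efld t 1 * (((m - 2 : ℕ) : ℂ) * t 1 ^ (m - 2 - 1))
            - t 1 ^ (m - 2) * fderiv ℂ (fun s => Efld s 0) t e₀v
            + 2 * (t 1 ^ (m - 2) * fderiv ℂ (fun s => Efld s 1) t e₁v) = t 1 ^ (m - 2) := by
      intro t ht
      have k00 := H (fun _ => ![1,0]) (fun _ => ![1,0]) (hd _) (hd _) t ht
      have k11 := H (fun _ => ![0,1]) (fun _ => ![0,1]) (hd _) (hd _) t ht
      have h1 := congrFun k00 0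
      have h2 := congrFun k00 1
      have h3 := congrFun k11 0
      have h4 := congrFun k11 1
      simp only [Pi.sub_apply, vbracket_apply, vmul_zero', vmul_one', Matrix.cons_val_zero,
        Matrix.cons_val_one, Matrix.head_cons, mul_zero, zero_mul, mul_one, one_mul, add_zero,
        zero_add, fderiv_fun_const, Pi.zero_apply, ContinuousLinearMap.zero_apply, sub_zero,
        fderiv_pow_apply, ev00, ev01, ev10, ev11] at h1 h2 h3 h4
      refine ⟨by linear_combination h1, by linear_combination h2,
        by linear_combination h4 / 2 + (t 1 ^ (m - 2) / 2) * h2, by linear_combination h3⟩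
    -- first component
    have hproj0 : ∀ i : Fin 2, DifferentiableOn ℂ (fun s : Fin 2 → ℂ => s i) U :=
      fun i s _ => (hasFDerivAt_apply i s).differentiableAt.differentiableWithinAt
    have hf0 : ∀ t ∈ U, Efld t 0 - t 0 = Efld 0 0 := by
      intro t ht
      have := const_on_of_fderiv_zero hU hUc ((hE 0).sub (hproj0 0)) ?_ ht h0
      · simpa using this
      intro s hs
      obtain ⟨A1, A2, A3, A4⟩ := key s hs
      have hdE : HasFDerivAt (fun u => Efld u 0)
          (fderiv ℂ (fun u => Efld u 0) s) s :=
        ((hE 0).differentiableAt (hU.mem_nhds hs)).hasFDerivAt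
      have hsub := hdE.sub (hasFDerivAt_apply 0 s)
      rw [hsub.fderiv]
      exact clm_eq_zero _ (by simp [A1, ev00]) (by simp [A3, ev10])
    -- second component : W trick
    set g : (Fin 2 → ℂ) → ℂ := fun s => Efld s 1 - 2 / (m : ℂ) * s 1 with hg
    have hgdiff : DifferentiableOn ℂ g U :=
      (hE 1).sub (((hproj0 1)).const_mul _)
    have hgd : ∀ t ∈ U, HasFDerivAt g
        (fderiv ℂ (fun s => Efld s 1) t
          - (2 / (m : ℂ)) • (ContinuousLinearMap.proj 1 : (Fin 2 → ℂ) →L[ℂ] ℂ)) t := by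
      intro t ht
      have hdE : HasFDerivAt (fun u => Efld u 1) (fderiv ℂ (fun u => Efld u 1) t) t :=
        ((hE 1).differentiableAt (hU.mem_nhds ht)).hasFDerivAt
      exact hdE.sub ((hasFDerivAt_apply 1 t).const_mul _)
    have hW : ∀ t ∈ U, g t * g t * t 1 ^ (m - 2) = 0 := by
      have hWdiff : DifferentiableOn ℂ (fun s => g s * g s * s 1 ^ (m - 2)) U :=
        (hgdiff.mul hgdiff).mul (fun s _ =>
          (hasF_proj_pow (m - 2) s).differentiableAt.differentiableWithinAt)
      have hWz : ∀ t ∈ U, fderiv ℂ (fun s => g s * g s * s 1 ^ (m - 2)) t = 0 := by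
        intro t ht
        obtain ⟨A1, A2, A3, A4⟩ := key t ht
        have hprod : HasFDerivAt (fun s => g s * g s * s 1 ^ (m - 2)) _ t := ((hgd t ht).mul (hgd t ht)).mul (hasF_proj_pow (m - 2) t)
        rw [hprod.fderiv]
        refine clm_eq_zero _ ?_ ?_ <;>
          simp only [ContinuousLinearMap.add_apply, ContinuousLinearMap.smul_apply,
            ContinuousLinearMap.sub_apply, ContinuousLinearMap.proj_apply, smul_eq_mul, Pi.mul_apply,
            ev00, ev01, ev10, ev11]
        · rw [A2]; ring
        · -- the main algebraic identity
          rw [hc2, he21] at A4 ⊢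
          have hpow : t 1 ^ (m - 2) = t 1 * t 1 ^ (m - 3) := by
            rw [show m - 2 = m - 3 + 1 by omega, pow_succ']
          rw [A1] at A4
          simp only [hg]
          rw [hpow] at A4 ⊢
          obtain ⟨ν, hν⟩ : ∃ ν : ℂ, ν = 2 / (m : ℂ) := ⟨_, rfl⟩
          have hν2 : (m : ℂ) * ν = 2 := by rw [hν]; field_simp
          rw [← hν]
          linear_combination (Efld t 1 - ν * t 1) * A4
            - (Efld t 1 - ν * t 1) * t 1 * t 1 ^ (m - 3) * hν2
      intro t ht
      have := const_on_of_fderiv_zero hU hUc hWdiff hWz ht h0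
      simpa [zero_pow (by omega : m - 2 ≠ 0)] using this
    have hgz : ∀ t ∈ U, g t = 0 := by
      refine eq_zero_on_slice hU (hgdiff.continuousOn) ?_
      intro t ht h1
      have := hW t ht
      rcases mul_eq_zero.mp this with h | h
      · rcases mul_eq_zero.mp h with h' | h' <;> exact h'
      · exact absurd h (pow_ne_zero _ h1)
    refine ⟨Efld 0 0, fun t ht => ?_⟩
    funext i
    fin_cases i
    · simpa [sub_eq_iff_eq_add'] using hf0 t ht
    · have := hgz t ht
      simp only [hg] at this
      simpa [sub_eq_zero] using this

  · rintro ⟨c₁, hc⟩ X Y hX hY t ht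
    have hμ : ((m : ℂ)) ≠ 0 := by
      exact Nat.cast_ne_zero.mpr (by omega : m ≠ 0)
    have hc2 : ((m - 2 : ℕ) : ℂ) = (m : ℂ) - 2 := by
      push_cast [Nat.cast_sub (by omega : 2 ≤ m)]; ring
    have he21 : m - 2 - 1 = m - 3 := by omega
    have hpow : t 1 ^ (m - 2) = t 1 * t 1 ^ (m - 3) := by
      rw [show m - 2 = m - 3 + 1 by omega, pow_succ']
    have hXa : ∀ i, DifferentiableAt ℂ (fun s => X s i) t :=
      fun i => (hX i).differentiableAt (hU.mem_nhds ht)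
    have hYa : ∀ i, DifferentiableAt ℂ (fun s => Y s i) t :=
      fun i => (hY i).differentiableAt (hU.mem_nhds ht)
    have hEv0 : Efld t 0 = t 0 + c₁ := by rw [hc t ht]; simp
    have hEv1 : Efld t 1 = 2 / (m : ℂ) * t 1 := by rw [hc t ht]; simp
    have hfd0 : fderiv ℂ (fun s => Efld s 0) t
        = (ContinuousLinearMap.proj 0 : (Fin 2 → ℂ) →L[ℂ] ℂ) := by
      have hev : (fun s => Efld s 0) =ᶠ[nhds t] (fun s => s 0 + c₁) := by
        filter_upwards [hU.mem_nhds ht] with s hs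
        rw [hc s hs]; simp
      rw [hev.fderiv_eq]
      have := (hasFDerivAt_apply (𝕜 := ℂ) 0 t).add_const c₁
      simpa using this.fderiv
    have hfd1 : fderiv ℂ (fun s => Efld s 1) t
        = (2 / (m : ℂ)) • (ContinuousLinearMap.proj 1 : (Fin 2 → ℂ) →L[ℂ] ℂ) := by
      have hev : (fun s => Efld s 1) =ᶠ[nhds t] (fun s => 2 / (m : ℂ) * s 1) := by
        filter_upwards [hU.mem_nhds ht] with s hs
        rw [hc s hs]; simp
      rw [hev.fderiv_eq]
      exact ((hasFDerivAt_apply (𝕜 := ℂ) 1 t).const_mul _).fderiv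
    have V00 := fderiv_vmul0 m X Y t e₀v (hXa 0) (hXa 1) (hYa 0) (hYa 1)
    have V01 := fderiv_vmul0 m X Y t e₁v (hXa 0) (hXa 1) (hYa 0) (hYa 1)
    have V10 := fderiv_vmul1 m X Y t e₀v (hXa 0) (hXa 1) (hYa 0) (hYa 1)
    have V11 := fderiv_vmul1 m X Y t e₁v (hXa 0) (hXa 1) (hYa 0) (hYa 1)
    simp only [vmul_zero', vmul_one', ev00, ev01, ev10, ev11, mul_zero, zero_mul, mul_one,
      add_zero, zero_add] at V00 V01 V10 V11
    funext i
    fin_cases i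
    · show (vbracket Efld (vmulI2 m X Y) t - vmulI2 m (vbracket Efld X) Y t
        - vmulI2 m X (vbracket Efld Y) t) 0 = vmulI2 m X Y t 0
      simp only [Pi.sub_apply, vbracket_apply, vmul_zero', vmul_one', V00, V01, V10, V11,
        hfd0, hfd1, hEv0, hEv1, ContinuousLinearMap.proj_apply, ContinuousLinearMap.smul_apply,
        smul_eq_mul, ev00, ev01, ev10, ev11]
      rw [hc2, he21]
      obtain ⟨ν, hν⟩ : ∃ ν : ℂ, ν = 2 / (m : ℂ) := ⟨_, rfl⟩
      have hν2 : (m : ℂ) * ν = 2 := by rw [hν]; field_simp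
      rw [← hν, hpow]
      linear_combination (X t 1 * Y t 1 * t 1 * t 1 ^ (m - 3)) * hν2
    · show (vbracket Efld (vmulI2 m X Y) t - vmulI2 m (vbracket Efld X) Y t
        - vmulI2 m X (vbracket Efld Y) t) 1 = vmulI2 m X Y t 1
      simp only [Pi.sub_apply, vbracket_apply, vmul_zero', vmul_one', V00, V01, V10, V11,
        hfd0, hfd1, hEv0, hEv1, ContinuousLinearMap.proj_apply, ContinuousLinearMap.smul_apply,
        smul_eq_mul, ev00, ev01, ev10, ev11]
      ring
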